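/- Let A be a type with two binary operations | and ∗. If axiom C6 ((x|y) ∗ y = x for all x, y) and axiom C4 ((a|b)∗(c|d) = (a∗c)|(b∗d) for all a,b,c,d) hold, then axiom C7 holds: (x∗y) | y = x for all x, y. (Lemma 2.1.3(c).) -/
import Mathlib

/-- Lemma 2.1.3(c): axioms C6 and C4 imply axiom C7. -/
theorem conway_C6_C4_imp_C7 {A : Type*} (bar ast : A → A → A)
    (hC6 : ∀ x y : A, ast (bar x y) y = x)
    (hC4 : ∀ a b c d : A, ast (bar a b) (bar c d) = bar (ast a c) (ast b d)) :
    ∀ x y : A, bar (ast x y) y = x := by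
  intro x y
  have h := hC4 x (bar y y) y y
  rw [hC6 x (bar y y), hC6 y y] at h
  exact h.symm
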